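/- Let G be a locally finite connected infinite vertex-transitive graph of linear growth (there is c with |B_n(o)| ≤ c·n + c for all n). Then G has exactly two ends. -/

import Mathlib

namespace Stmt19

open SimpleGraph

variable {V : Type*} {G : SimpleGraph V}

/-- Reachability by a walk avoiding the set `S`. -/
def RA (G : SimpleGraph V) (S : Set V) (u v : V) : Prop :=
  ∃ p : G.Walk u v, ∀ x ∈ p.support, x ∉ S

lemma RA.not_mem_left {S : Set V} {u v : V} (h : RA G S u v) : u ∉ S := by
  obtain ⟨p, hp⟩ := h
  exact hp u p.start_mem_support

lemma RA.not_mem_right {S : Set V} {u v : V} (h : RA G S u v) : v ∉ S := by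
  obtain ⟨p, hp⟩ := h
  exact hp v p.end_mem_support

lemma RA.mono {S S' : Set V} {u v : V} (hsub : S' ⊆ S) (h : RA G S u v) : RA G S' u v := by
  obtain ⟨p, hp⟩ := h
  exact ⟨p, fun x hx hx' => hp x hx (hsub hx')⟩

lemma RA.refl {S : Set V} {u : V} (h : u ∉ S) : RA G S u u :=
  ⟨Walk.nil, by simp [h]⟩

lemma RA.symm {S : Set V} {u v : V} (h : RA G S u v) : RA G S v u := by
  obtain ⟨p, hp⟩ := h
  exact ⟨p.reverse, fun x hx => hp x (by simpa using hx)⟩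

lemma RA.trans {S : Set V} {u v w : V} (h : RA G S u v) (h' : RA G S v w) : RA G S u w := by
  obtain ⟨p, hp⟩ := h
  obtain ⟨q, hq⟩ := h'
  refine ⟨p.append q, fun x hx => ?_⟩
  rcases (Walk.mem_support_append_iff _ _).mp hx with hx | hx
  · exact hp x hx
  · exact hq x hx

lemma RA.reachable {S : Set V} {u v : V} (h : RA G S u v) : G.Reachable u v := by
  obtain ⟨p, _⟩ := h
  exact ⟨p⟩

lemma RA.adj {S : Set V} {u v : V} (h : G.Adj u v) (hu : u ∉ S) (hv : v ∉ S) : RA G S u v := by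
  refine ⟨h.toWalk, ?_⟩
  intro x hx
  simp only [Walk.support_cons, Walk.support_nil, List.mem_cons, List.mem_singleton,
    List.not_mem_nil, or_false] at hx
  rcases hx with rfl | rfl
  · exact hu
  · exact hv

/-- Every vertex on a walk is `RA`-reachable from the start (avoiding S). -/
lemma RA.of_mem_support {S : Set V} {u v : V} (p : G.Walk u v)
    (hp : ∀ x ∈ p.support, x ∉ S) {x : V} (hx : x ∈ p.support) : RA G S u x := by
  classical
  refine ⟨p.takeUntil x hx, fun y hy => hp y ?_⟩
  exact Walk.support_takeUntil_subset _ _ hy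

/-- distance from the start of a walk to any support vertex is at most its length. -/
lemma dist_start_le_of_mem_support {u v : V} (p : G.Walk u v) {x : V}
    (hx : x ∈ p.support) : G.dist u x ≤ p.length := by
  classical
  exact le_trans (SimpleGraph.dist_le (p.takeUntil x hx)) (Walk.length_takeUntil_le p hx)

/-- Discrete intermediate value theorem along a walk, for distances to a center `c`. -/
lemma exists_dist_eq_on_walk (hconn : G.Connected) (c : V) {a b : V} (p : G.Walk a b) :
    ∀ {ρ : ℕ}, G.dist c a ≤ ρ → ρ ≤ G.dist c b → ∃ x ∈ p.support, G.dist c x = ρ := by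
  induction p with
  | nil =>
    intro ρ ha hb
    exact ⟨_, by simp, le_antisymm ha hb⟩
  | @cons a a' b h q ih =>
    intro ρ ha hb
    by_cases hcase : G.dist c a' ≤ ρ
    · obtain ⟨x, hx, hx'⟩ := ih hcase hb
      exact ⟨x, by simp [hx], hx'⟩
    · push_neg at hcase
      have htri : G.dist c a' ≤ G.dist c a + 1 := by
        have h2 := hconn.dist_triangle (u := c) (v := a) (w := a')
        have h1 : G.dist a a' ≤ 1 := by simpa using SimpleGraph.dist_le h.toWalk
        omega
      exact ⟨a, by simp, by omega⟩

/-- First-hit decomposition of a walk into a set `S`. -/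
lemma exists_first_hit {S : Set V} {a b : V} (p : G.Walk a b) (ha : a ∉ S)
    (hhit : ∃ x ∈ p.support, x ∈ S) :
    ∃ u y : V, G.Adj y u ∧ y ∉ S ∧ u ∈ S ∧
      ∃ q : G.Walk a u, (∀ x ∈ q.support, x = u ∨ x ∉ S) ∧ ∀ x ∈ q.support, x ∈ p.support := by
  induction p with
  | nil =>
    obtain ⟨x, hx, hxS⟩ := hhit
    simp only [Walk.support_nil, List.mem_singleton] at hx
    subst hx; exact absurd hxS ha
  | @cons a a' b h q ih =>
    by_cases ha' : a' ∈ S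
    · refine ⟨a', a, h, ha, ha', h.toWalk, fun x hx => ?_, fun x hx => ?_⟩
      · simp only [Walk.support_cons, Walk.support_nil, List.mem_cons, List.mem_singleton,
          List.not_mem_nil, or_false] at hx
        rcases hx with rfl | rfl
        · exact Or.inr ha
        · exact Or.inl rfl
      · simp only [Walk.support_cons, Walk.support_nil, List.mem_cons, List.mem_singleton,
          List.not_mem_nil, or_false] at hx
        rcases hx with rfl | rfl
        · simp
        · simp [q.start_mem_support]
    · have hhit' : ∃ x ∈ q.support, x ∈ S := by
        obtain ⟨x, hx, hxS⟩ := hhit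
        simp only [Walk.support_cons, List.mem_cons] at hx
        rcases hx with rfl | hx
        · exact absurd hxS ha
        · exact ⟨x, hx, hxS⟩
      obtain ⟨u, y, hadj, hy, hu, q', hq'1, hq'2⟩ := ih ha' hhit'
      refine ⟨u, y, hadj, hy, hu, Walk.cons h q', fun x hx => ?_, fun x hx => ?_⟩
      · simp only [Walk.support_cons, List.mem_cons] at hx
        rcases hx with rfl | hx
        · exact Or.inr ha
        · exact hq'1 x hx
      · simp only [Walk.support_cons, List.mem_cons] at hx ⊢
        rcases hx with rfl | hx
        · exact Or.inl rfl
        · exact Or.inr (hq'2 x hx)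

section Iso

variable (φ : G ≃g G)

lemma iso_dist_eq (u v : V) : G.dist (φ u) (φ v) = G.dist u v := by
  have key : ∀ (ψ : G ≃g G) (a b : V), G.dist (ψ a) (ψ b) ≤ G.dist a b := by
    intro ψ a b
    by_cases hr : G.Reachable a b
    · obtain ⟨p, hp⟩ := hr.exists_walk_length_eq_dist
      calc G.dist (ψ a) (ψ b) ≤ (p.map ψ.toHom).length := SimpleGraph.dist_le _
        _ = p.length := Walk.length_map _ _
        _ = G.dist a b := hp
    · rw [SimpleGraph.dist_eq_zero_of_not_reachable hr,
        SimpleGraph.dist_eq_zero_of_not_reachable]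
      intro hr'
      have := SimpleGraph.Reachable.map ψ.symm.toHom hr'
      apply hr
      simpa using this
  refine le_antisymm (key φ u v) ?_
  have := key φ.symm (φ u) (φ v)
  simpa using this

lemma RA.map {S : Set V} {u v : V} (h : RA G S u v) : RA G (φ '' S) (φ u) (φ v) := by
  obtain ⟨p, hp⟩ := h
  refine ⟨p.map φ.toHom, fun x hx => ?_⟩
  rw [Walk.support_map, List.mem_map] at hx
  obtain ⟨y, hy, rfl⟩ := hx
  rintro ⟨z, hz, hzy⟩
  have hzy' : z = y := φ.injective hzy
  exact hp y hy (hzy' ▸ hz)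

end Iso


/-- The ball of radius `n` around `x`. -/
def ballS (G : SimpleGraph V) (x : V) (n : ℕ) : Set V := {v | G.dist x v ≤ n}

/-- The sphere of radius `n` around `x`. -/
def sphS (G : SimpleGraph V) (x : V) (n : ℕ) : Set V := {v | G.dist x v = n}

lemma sphS_subset_ballS {x : V} {n : ℕ} : sphS G x n ⊆ ballS G x n := fun v hv => le_of_eq hv

lemma ballS_mono {x : V} {n m : ℕ} (h : n ≤ m) : ballS G x n ⊆ ballS G x m :=
  fun v hv => le_trans hv h

section Growth

variable (hconn : G.Connected) (o : V) {c : ℕ}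
  (hc : ∀ n : ℕ, {v : V | G.dist o v ≤ n}.Finite ∧ {v : V | G.dist o v ≤ n}.ncard ≤ c * n + c)

include hconn hc in
lemma ball_fin (x : V) (n : ℕ) : (ballS G x n).Finite := by
  refine ((hc (n + G.dist o x)).1.subset ?_)
  intro v hv
  have h1 : G.dist o v ≤ G.dist o x + G.dist x v := hconn.dist_triangle
  have h2 : G.dist x v ≤ n := hv
  simp only [Set.mem_setOf_eq]
  omega

include hconn hc in
lemma sph_fin (x : V) (n : ℕ) : (sphS G x n).Finite :=
  (ball_fin hconn o hc x n).subset sphS_subset_ballS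

include hconn hc in
lemma exists_dist_eq [Infinite V] (x : V) (n : ℕ) : ∃ v, G.dist x v = n := by
  obtain ⟨w, hw⟩ := ((ball_fin hconn o hc x n).infinite_compl).nonempty
  simp only [Set.mem_compl_iff, ballS, Set.mem_setOf_eq, not_le] at hw
  obtain ⟨p⟩ := hconn x w
  obtain ⟨y, _, hy⟩ := exists_dist_eq_on_walk hconn x p (ρ := n)
    (by rw [SimpleGraph.dist_self]; exact Nat.zero_le n) (le_of_lt hw)
  exact ⟨y, hy⟩

lemma iso_image_ballS (φ : G ≃g G) (x : V) (n : ℕ) :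
    φ '' ballS G x n = ballS G (φ x) n := by
  ext v
  constructor
  · rintro ⟨y, hy, rfl⟩
    show G.dist (φ x) (φ y) ≤ n
    rw [iso_dist_eq]
    exact hy
  · intro hv
    refine ⟨φ.symm v, ?_, by simp⟩
    show G.dist x (φ.symm v) ≤ n
    have h2 : G.dist (φ.symm (φ x)) (φ.symm v) = G.dist (φ x) v := iso_dist_eq φ.symm _ _
    simp only [RelIso.symm_apply_apply] at h2
    rw [h2]
    exact hv

lemma iso_image_sphS (φ : G ≃g G) (x : V) (n : ℕ) :
    φ '' sphS G x n = sphS G (φ x) n := by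
  ext v
  constructor
  · rintro ⟨y, hy, rfl⟩
    show G.dist (φ x) (φ y) = n
    rw [iso_dist_eq]
    exact hy
  · intro hv
    refine ⟨φ.symm v, ?_, by simp⟩
    show G.dist x (φ.symm v) = n
    have h2 : G.dist (φ.symm (φ x)) (φ.symm v) = G.dist (φ x) v := iso_dist_eq φ.symm _ _
    simp only [RelIso.symm_apply_apply] at h2
    rw [h2]
    exact hv

include hconn hc in
/-- Existence of a small sphere at scale `(2m, 4m]`. -/
lemma exists_small_sphere {m : ℕ} (hm : c < m) :
    ∃ ρ, 2 * m < ρ ∧ ρ ≤ 4 * m ∧ (sphS G o ρ).ncard ≤ 2 * c := by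
  classical
  by_contra hcon
  push_neg at hcon
  -- each sphere in the range has ≥ 2c+1 elements
  have hball : ((hc (4 * m)).1.toFinset).card ≤ c * (4 * m) + c := by
    rw [← Set.ncard_eq_toFinset_card _ (hc (4 * m)).1]
    exact (hc (4 * m)).2
  set S : ℕ → Finset V := fun ρ => (sph_fin hconn o hc o ρ).toFinset with hS
  have hdisj : ∀ ρ₁ ∈ Finset.Ioc (2 * m) (4 * m), ∀ ρ₂ ∈ Finset.Ioc (2 * m) (4 * m),
      ρ₁ ≠ ρ₂ → Disjoint (S ρ₁) (S ρ₂) := by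
    intro ρ₁ _ ρ₂ _ hne
    refine Finset.disjoint_left.mpr fun v hv1 hv2 => ?_
    simp only [hS, Set.Finite.mem_toFinset, sphS, Set.mem_setOf_eq] at hv1 hv2
    exact hne (hv1 ▸ hv2)
  have hsub : (Finset.Ioc (2 * m) (4 * m)).biUnion S ⊆ (hc (4 * m)).1.toFinset := by
    intro v hv
    simp only [Finset.mem_biUnion, Finset.mem_Ioc] at hv
    obtain ⟨ρ, ⟨_, hρ2⟩, hv⟩ := hv
    simp only [hS, Set.Finite.mem_toFinset, sphS, Set.mem_setOf_eq] at hv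
    simp only [Set.Finite.mem_toFinset, Set.mem_setOf_eq]
    omega
  have hcard : ∀ ρ ∈ Finset.Ioc (2 * m) (4 * m), 2 * c + 1 ≤ (S ρ).card := by
    intro ρ hρ
    simp only [Finset.mem_Ioc] at hρ
    have := hcon ρ hρ.1 hρ.2
    have heq : (sphS G o ρ).ncard = (S ρ).card := Set.ncard_eq_toFinset_card _ _
    rw [heq] at this
    omega
  have hsum : (Finset.Ioc (2 * m) (4 * m)).card * (2 * c + 1) ≤
      ((Finset.Ioc (2 * m) (4 * m)).biUnion S).card := by
    rw [Finset.card_biUnion hdisj]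
    calc (Finset.Ioc (2 * m) (4 * m)).card * (2 * c + 1)
        = ∑ _ρ ∈ Finset.Ioc (2 * m) (4 * m), (2 * c + 1) := by
          rw [Finset.sum_const, smul_eq_mul]
      _ ≤ ∑ ρ ∈ Finset.Ioc (2 * m) (4 * m), (S ρ).card := Finset.sum_le_sum hcard
  have hIoc : (Finset.Ioc (2 * m) (4 * m)).card = 2 * m := by
    rw [Nat.card_Ioc]; omega
  have := le_trans hsum (le_trans (Finset.card_le_card hsub) hball)
  rw [hIoc] at this
  nlinarith

end Growth

/-- A vertex is `deep` w.r.t. a set `S` if it can reach arbitrarily far vertices avoiding `S`. -/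
def deep (G : SimpleGraph V) (S : Set V) (v : V) : Prop :=
  ∀ n : ℕ, ∃ w, RA G S v w ∧ n ≤ G.dist v w

lemma deep.not_mem {S : Set V} {v : V} (h : deep G S v) : v ∉ S :=
  (h 0).choose_spec.1.not_mem_left

lemma deep_map (φ : G ≃g G) {S : Set V} {v : V} (h : deep G S v) : deep G (φ '' S) (φ v) := by
  intro n
  obtain ⟨w, hRA, hd⟩ := h n
  exact ⟨φ w, hRA.map φ, by rw [iso_dist_eq]; exact hd⟩

lemma symm_image_image (φ : G ≃g G) (S : Set V) : φ.symm '' (φ '' S) = S := by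
  ext x
  simp only [Set.mem_image, exists_exists_and_eq_and]
  constructor
  · rintro ⟨y, hy, rfl⟩
    simpa using hy
  · intro hx
    exact ⟨x, hx, by simp⟩

lemma deep_iff_map (φ : G ≃g G) {S : Set V} {v : V} :
    deep G (φ '' S) (φ v) ↔ deep G S v := by
  constructor
  · intro h
    have h2 := deep_map φ.symm h
    rw [symm_image_image] at h2
    simpa using h2
  · exact deep_map φ

section Bridge

lemma mk_eq_of_walk {K : Set V} {u v : V} (p : G.Walk u v) :
    ∀ (hp : ∀ x ∈ p.support, x ∉ K),
    G.componentComplMk (hp u p.start_mem_support) = G.componentComplMk (hp v p.end_mem_support) := by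
  induction p with
  | nil => intro hp; rfl
  | @cons a b c h q ih =>
    intro hp
    have hq : ∀ x ∈ q.support, x ∉ K := fun x hx => hp x (by simp [hx])
    exact (G.componentComplMk_eq_of_adj (hp a (by simp))
      (hq b q.start_mem_support) h).trans (ih hq)

lemma mk_eq_of_RA {K : Set V} {u v : V} (h : RA G K u v) (hu : u ∉ K) (hv : v ∉ K) :
    G.componentComplMk hu = G.componentComplMk hv := by
  obtain ⟨p, hp⟩ := h
  exact mk_eq_of_walk p hp

lemma RA_of_reachable_induce {K : Set V} {u v : ↥(Kᶜ)}
    (h : (G.induce Kᶜ).Reachable u v) : RA G K ↑u ↑v := by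
  obtain ⟨p⟩ := h
  induction p with
  | @nil a => exact RA.refl a.prop
  | @cons a b c h q ih =>
    have hadj : G.Adj ↑a ↑b := h
    exact (RA.adj hadj a.prop b.prop).trans ih

lemma mem_supp_iff_RA {K : Set V} {v : V} (hv : v ∉ K) (w : V) :
    w ∈ (G.componentComplMk hv).supp ↔ RA G K v w := by
  constructor
  · rintro ⟨hw, heq⟩
    have hreach : (G.induce Kᶜ).Reachable ⟨w, hw⟩ ⟨v, hv⟩ := ConnectedComponent.exact heq
    exact (RA_of_reachable_induce hreach).symm
  · intro h
    exact ⟨h.not_mem_right, (mk_eq_of_RA h.symm h.not_mem_right hv)⟩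

variable (hconn : G.Connected) (o : V) {c : ℕ}
  (hc : ∀ n : ℕ, {v : V | G.dist o v ≤ n}.Finite ∧ {v : V | G.dist o v ≤ n}.ncard ≤ c * n + c)

include hconn hc in
lemma supp_infinite_iff_deep {K : Set V} {v : V} (hv : v ∉ K) :
    (G.componentComplMk (show v ∉ K from hv)).supp.Infinite ↔ deep G K v := by
  constructor
  · intro hinf n
    obtain ⟨w, hw⟩ := (hinf.diff (ball_fin hconn o hc v n)).nonempty
    rw [Set.mem_diff, mem_supp_iff_RA] at hw
    refine ⟨w, hw.1, ?_⟩
    have := hw.2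
    simp only [ballS, Set.mem_setOf_eq, not_le] at this
    omega
  · intro hdeep hfin
    set N := hfin.toFinset.sup (G.dist v) with hN
    obtain ⟨w, hRA, hd⟩ := hdeep (N + 1)
    have hw : w ∈ (G.componentComplMk hv).supp := (mem_supp_iff_RA hv w).mpr hRA
    have : G.dist v w ≤ N := Finset.le_sup (hfin.mem_toFinset.mpr hw)
    omega

/-- The (finite) set of non-deep vertices for the ball of radius `r` around `x`. -/
def DsetS (G : SimpleGraph V) (x : V) (r : ℕ) : Set V := {v | ¬ deep G (ballS G x r) v}

include hconn hc in
lemma DsetS_finite [∀ v : V, Fintype (G.neighborSet v)] (r : ℕ) : (DsetS G o r).Finite := by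
  classical
  haveI : Fact G.Preconnected := ⟨hconn.preconnected⟩
  set K : Finset V := (ball_fin hconn o hc o r).toFinset with hK
  have hKco : (K : Set V) = ballS G o r := Set.Finite.coe_toFinset _
  have hsub : DsetS G o r ⊆ (K : Set V) ∪
      ⋃ (C : G.ComponentCompl (K : Set V)), {v | v ∈ C.supp ∧ C.supp.Finite} := by
    intro v hv
    by_cases hvb : v ∈ ballS G o r
    · left; rw [hKco]; exact hvb
    · right
      have hvK : v ∉ (K : Set V) := by rw [hKco]; exact hvb
      refine Set.mem_iUnion.mpr ⟨G.componentComplMk hvK, G.componentComplMk_mem hvK, ?_⟩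
      have hninf : ¬ (G.componentComplMk hvK).supp.Infinite := by
        intro hinf
        apply hv
        have hiff := supp_infinite_iff_deep hconn o hc (K := (K : Set V)) (v := v) hvK
        rw [hiff] at hinf
        rwa [hKco] at hinf
      exact Set.not_infinite.mp hninf
  refine Set.Finite.subset (Set.Finite.union K.finite_toSet ?_) hsub
  refine Set.finite_iUnion fun C => ?_
  by_cases hC : C.supp.Finite
  · exact hC.subset fun v hv => hv.1
  · convert Set.finite_empty
    ext v
    simp only [Set.mem_setOf_eq, Set.mem_empty_iff_false, iff_false, not_and]
    exact fun _ => hC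

variable (htrans : ∀ u v : V, ∃ φ : G ≃g G, φ u = v)

include hconn hc htrans in
lemma exists_Rbound [∀ v : V, Fintype (G.neighborSet v)] (r : ℕ) :
    ∃ R : ℕ, r ≤ R ∧ ∀ x v : V, ¬ deep G (ballS G x r) v → G.dist x v ≤ R := by
  classical
  set R₀ := ((DsetS_finite hconn o hc r).toFinset.sup (G.dist o)) with hR₀
  refine ⟨max r R₀, le_max_left _ _, fun x v hv => ?_⟩
  obtain ⟨φ, hφ⟩ := htrans o x
  have hv₀ : ¬ deep G (ballS G o r) (φ.symm v) := by
    intro hdeep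
    apply hv
    have := deep_map φ hdeep
    rw [iso_image_ballS, hφ] at this
    simpa using this
  have hmem : φ.symm v ∈ DsetS G o r := hv₀
  have hle : G.dist o (φ.symm v) ≤ R₀ :=
    Finset.le_sup ((DsetS_finite hconn o hc r).mem_toFinset.mpr hmem)
  have hdist : G.dist x v = G.dist o (φ.symm v) := by
    have h2 : G.dist (φ.symm x) (φ.symm v) = G.dist x v := iso_dist_eq φ.symm _ _
    rw [← h2, ← hφ]
    simp
  omega

end Bridge

section Surgery

lemma finset_bdd_pair_choice {α : Type*} (F : Finset α) (P : α → α → ℕ → Prop)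
    (hmono : ∀ a b n m, n ≤ m → P a b n → P a b m)
    (h : ∀ a ∈ F, ∀ b ∈ F, ∃ n, P a b n) : ∃ N, ∀ a ∈ F, ∀ b ∈ F, P a b N := by
  classical
  set g : α × α → ℕ := fun p => if hp : ∃ n, P p.1 p.2 n then hp.choose else 0 with hg
  refine ⟨(F ×ˢ F).sup g, fun a ha b hb => ?_⟩
  have hab : ∃ n, P a b n := h a ha b hb
  have h1 : P a b (g (a, b)) := by
    rw [hg]; simp only [dif_pos hab]; exact hab.choose_spec
  exact hmono a b _ _ (Finset.le_sup (Finset.mem_product.mpr ⟨ha, hb⟩)) h1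

variable {o : V} {c : ℕ} [∀ v : V, Fintype (G.neighborSet v)]

/-- Existence of uniform detours around balls, given one-endedness `Hone`. -/
lemma exists_detour (hconn : G.Connected)
    (hc : ∀ n : ℕ, {v : V | G.dist o v ≤ n}.Finite ∧ {v : V | G.dist o v ≤ n}.ncard ≤ c * n + c)
    (htrans : ∀ u v : V, ∃ φ : G ≃g G, φ u = v)
    (Hone : ∀ S : Set V, S.Finite → ∀ u v : V, deep G S u → deep G S v → RA G S u v)
    (r : ℕ) :
    ∃ R L : ℕ, r ≤ R ∧ (∀ x v : V, ¬ deep G (ballS G x r) v → G.dist x v ≤ R) ∧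
      (∀ x u v : V, G.dist x u = R + 1 → G.dist x v = R + 1 →
        ∃ p : G.Walk u v, p.length ≤ L ∧ ∀ y ∈ p.support, r < G.dist x y) := by
  classical
  obtain ⟨R, hrR, habs⟩ := exists_Rbound hconn o hc htrans r
  -- detours at the base point o
  have hdeepo : ∀ u : V, G.dist o u = R + 1 → deep G (ballS G o r) u := by
    intro u hu
    by_contra hnd
    have := habs o u hnd
    omega
  set F : Finset V := (sph_fin hconn o hc o (R + 1)).toFinset with hF
  have hbase : ∀ u ∈ F, ∀ v ∈ F, ∃ L, ∃ p : G.Walk u v, p.length ≤ L ∧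
      ∀ y ∈ p.support, r < G.dist o y := by
    intro u hu v hv
    rw [hF, Set.Finite.mem_toFinset] at hu hv
    obtain ⟨p, hp⟩ := Hone (ballS G o r) (ball_fin hconn o hc o r) u v (hdeepo u hu) (hdeepo v hv)
    refine ⟨p.length, p, le_refl _, fun y hy => ?_⟩
    have := hp y hy
    simp only [ballS, Set.mem_setOf_eq, not_le] at this
    exact this
  obtain ⟨L, hL⟩ := finset_bdd_pair_choice F
    (fun u v L => ∃ p : G.Walk u v, p.length ≤ L ∧ ∀ y ∈ p.support, r < G.dist o y)
    (fun a b n m hnm ⟨p, h1, h2⟩ => ⟨p, le_trans h1 hnm, h2⟩) hbase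
  refine ⟨R, L, hrR, habs, fun x u v hu hv => ?_⟩
  obtain ⟨φ, hφ⟩ := htrans o x
  have hox : φ.symm x = o := by rw [← hφ]; simp
  have hu₀ : G.dist o (φ.symm u) = R + 1 := by
    have h2 : G.dist (φ.symm x) (φ.symm u) = G.dist x u := iso_dist_eq φ.symm _ _
    rw [hox] at h2
    rw [h2]; exact hu
  have hv₀ : G.dist o (φ.symm v) = R + 1 := by
    have h2 : G.dist (φ.symm x) (φ.symm v) = G.dist x v := iso_dist_eq φ.symm _ _
    rw [hox] at h2
    rw [h2]; exact hv
  obtain ⟨p₀, hlen, havoid⟩ := hL (φ.symm u) (by rw [hF, Set.Finite.mem_toFinset]; exact hu₀)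
    (φ.symm v) (by rw [hF, Set.Finite.mem_toFinset]; exact hv₀)
  refine ⟨(p₀.map φ.toHom).copy (by simp) (by simp), ?_, ?_⟩
  · rw [Walk.length_copy, Walk.length_map]; exact hlen
  · intro y hy
    rw [Walk.support_copy, Walk.support_map, List.mem_map] at hy
    obtain ⟨y₀, hy₀, rfl⟩ := hy
    have h2 : G.dist x (φ.toHom y₀) = G.dist o y₀ := by
      have h3 := iso_dist_eq φ o y₀
      rw [hφ] at h3
      exact h3
    rw [h2]
    exact havoid y₀ hy₀

/-- The surgery lemma: a clustered set `W` can be avoided. -/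
lemma surgery (hconn : G.Connected) {Rf Lf : ℕ → ℕ}
    (hRf : ∀ r, r ≤ Rf r)
    (hdet : ∀ r x u v, G.dist x u = Rf r + 1 → G.dist x v = Rf r + 1 →
      ∃ p : G.Walk u v, p.length ≤ Lf r ∧ ∀ y ∈ p.support, r < G.dist x y)
    (τ : ℕ) :
    ∀ (W : Finset V), (∀ u ∈ W, ∀ v ∈ W,
        G.dist u v ≤ τ ∨ Rf (2*τ) + Lf (2*τ) + 2*τ + 2 < G.dist u v) →
    ∀ (X : Set V), (∀ w ∈ W, ∀ y : V, G.dist w y ≤ Rf (2*τ) + 1 + Lf (2*τ) → y ∉ X) →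
    ∀ {a b : V}, (∀ w ∈ W, Rf (2*τ) + Lf (2*τ) + 2*τ + 2 < G.dist w a) →
    (∀ w ∈ W, Rf (2*τ) + Lf (2*τ) + 2*τ + 2 < G.dist w b) →
    RA G X a b → RA G (X ∪ (W : Set V)) a b := by
  classical
  intro W
  induction W using Finset.strongInductionOn with
  | _ W ih =>
  intro hpair X hX a b haW hbW hreach
  rcases W.eq_empty_or_nonempty with rfl | ⟨w₀, hw₀⟩
  · refine hreach.mono ?_
    simp
  set R₂ := Rf (2*τ) with hR₂
  set L₂ := Lf (2*τ) with hL₂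
  have h2τ : 2*τ ≤ R₂ := hRf _
  -- Step: avoid the ball around w₀ as well.
  have hstep : RA G (X ∪ ballS G w₀ (2*τ)) a b := by
    obtain ⟨p, hp⟩ := hreach
    by_cases hmiss : ∀ x ∈ p.support, x ∉ ballS G w₀ (R₂+1)
    · refine ⟨p, fun x hx hmem => ?_⟩
      rcases hmem with hX' | hball
      · exact hp x hx hX'
      · exact hmiss x hx (ballS_mono (by omega) hball)
    · push_neg at hmiss
      have haS : a ∉ ballS G w₀ (R₂+1) := by
        have := haW w₀ hw₀
        intro h
        have h2 : G.dist w₀ a ≤ R₂ + 1 := h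
        omega
      have hbS : b ∉ ballS G w₀ (R₂+1) := by
        have := hbW w₀ hw₀
        intro h
        have h2 : G.dist w₀ b ≤ R₂ + 1 := h
        omega
      obtain ⟨u, y, hadj, hy, hu, q₁, hq₁, hq₁sub⟩ := exists_first_hit p haS hmiss
      have hmiss' : ∃ x ∈ p.reverse.support, x ∈ ballS G w₀ (R₂+1) := by
        obtain ⟨x, hx, hxb⟩ := hmiss
        exact ⟨x, by rwa [Walk.support_reverse, List.mem_reverse], hxb⟩
      obtain ⟨v, y', hadj', hy', hv', q₂, hq₂, hq₂sub⟩ := exists_first_hit p.reverse hbS hmiss'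
      have hdu : G.dist w₀ u = R₂ + 1 := by
        have h1 : G.dist w₀ u ≤ R₂ + 1 := hu
        have h2 : ¬ G.dist w₀ y ≤ R₂ + 1 := hy
        have h3 : G.dist w₀ y ≤ G.dist w₀ u + G.dist u y := hconn.dist_triangle
        have h4 : G.dist u y ≤ 1 := by simpa using SimpleGraph.dist_le hadj.symm.toWalk
        omega
      have hdv : G.dist w₀ v = R₂ + 1 := by
        have h1 : G.dist w₀ v ≤ R₂ + 1 := hv'
        have h2 : ¬ G.dist w₀ y' ≤ R₂ + 1 := hy'
        have h3 : G.dist w₀ y' ≤ G.dist w₀ v + G.dist v y' := hconn.dist_triangle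
        have h4 : G.dist v y' ≤ 1 := by simpa using SimpleGraph.dist_le hadj'.symm.toWalk
        omega
      obtain ⟨d, hdlen, hdav⟩ := hdet (2*τ) w₀ u v hdu hdv
      refine ⟨q₁.append (d.append q₂.reverse), fun x hx hmem => ?_⟩
      rw [Walk.mem_support_append_iff] at hx
      rcases hx with hx | hx
      · -- on q₁
        rcases hmem with hX' | hball
        · exact hp x (hq₁sub x hx) hX'
        · rcases hq₁ x hx with rfl | hnball
          · have h2 : G.dist w₀ x ≤ 2*τ := hball
            omega
          · exact hnball (ballS_mono (by omega) hball)
      · rw [Walk.mem_support_append_iff] at hx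
        rcases hx with hx | hx
        · -- on the detour d
          rcases hmem with hX' | hball
          · have h1 : G.dist u x ≤ L₂ := le_trans (dist_start_le_of_mem_support d hx) hdlen
            have h2 : G.dist w₀ x ≤ G.dist w₀ u + G.dist u x := hconn.dist_triangle
            exact hX w₀ hw₀ x (by omega) hX'
          · have h2 : G.dist w₀ x ≤ 2*τ := hball
            have := hdav x hx
            omega
        · -- on q₂.reverse
          rw [Walk.support_reverse, List.mem_reverse] at hx
          rcases hmem with hX' | hball
          · have hxp : x ∈ p.support := by
              have := hq₂sub x hx
              rwa [Walk.support_reverse, List.mem_reverse] at this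
            exact hp x hxp hX'
          · rcases hq₂ x hx with rfl | hnball
            · have h2 : G.dist w₀ x ≤ 2*τ := hball
              omega
            · exact hnball (ballS_mono (by omega) hball)
  -- Recurse on the remaining clusters.
  set W' := W.filter (fun w => τ < G.dist w₀ w) with hW'
  have hW'ss : W' ⊂ W := by
    refine Finset.filter_ssubset.mpr ⟨w₀, hw₀, ?_⟩
    simp [SimpleGraph.dist_self]
  have hrec := ih W' hW'ss
    (fun u hu v hv => hpair u (Finset.mem_of_mem_filter u hu) v (Finset.mem_of_mem_filter v hv))
    (X ∪ ballS G w₀ (2*τ))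
    (by
      intro w hw y hdy hmem
      rcases hmem with hX' | hball
      · exact hX w (Finset.mem_of_mem_filter w hw) y hdy hX'
      · have h1 : G.dist w₀ y ≤ 2*τ := hball
        have h2 : G.dist w₀ w ≤ G.dist w₀ y + G.dist y w := hconn.dist_triangle
        have h3 : G.dist y w = G.dist w y := SimpleGraph.dist_comm ..
        have h4 := (Finset.mem_filter.mp hw).2
        rcases hpair w₀ hw₀ w (Finset.mem_of_mem_filter w hw) with h5 | h5
        · omega
        · omega)
    (fun w hw => haW w (Finset.mem_of_mem_filter w hw))
    (fun w hw => hbW w (Finset.mem_of_mem_filter w hw))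
    hstep
  refine hrec.mono ?_
  intro z hz
  rcases hz with hz | hz
  · exact Or.inl (Or.inl hz)
  · -- z ∈ W
    have hzW : z ∈ W := hz
    by_cases hzd : τ < G.dist w₀ z
    · exact Or.inr (by simp only [hW', Finset.coe_filter, Set.mem_setOf_eq]; exact ⟨hzW, hzd⟩)
    · push_neg at hzd
      exact Or.inl (Or.inr (by
        have : G.dist w₀ z ≤ 2*τ := by omega
        exact this))

end Surgery

section OneEnd

variable [∀ v : V, Fintype (G.neighborSet v)]

/-- A one-ended transitive graph of linear growth is absurd. -/
lemma one_end_absurd [Infinite V] (hconn : G.Connected) (o : V) {c : ℕ}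
    (hc : ∀ n : ℕ, {v : V | G.dist o v ≤ n}.Finite ∧ {v : V | G.dist o v ≤ n}.ncard ≤ c * n + c)
    (htrans : ∀ u v : V, ∃ φ : G ≃g G, φ u = v)
    (Hone : ∀ S : Set V, S.Finite → ∀ u v : V, deep G S u → deep G S v → RA G S u v) :
    False := by
  classical
  choose Rf Lf hrle habs hdet using exists_detour hconn hc htrans Hone
  set γ : ℕ → ℕ := fun τ => Rf (2*τ) + Lf (2*τ) + 2*τ + 2 with hγdef
  have hγgt : ∀ t, t < γ t := by
    intro t
    simp only [hγdef]
    omega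
  set τs : ℕ → ℕ := fun j => Nat.rec 1 (fun _ t => γ t) j with hτs
  have hτsucc : ∀ j, τs (j+1) = γ (τs j) := fun j => rfl
  have hτmono : Monotone τs := monotone_nat_of_le_succ (fun j => by
    rw [hτsucc]; exact le_of_lt (hγgt _))
  set T : ℕ := 4*c*c + 1 with hT
  set m : ℕ := c + 1 + τs T with hm'
  have hm : c < m := by omega
  obtain ⟨ρ, hρ1, hρ2, hρsmall⟩ := exists_small_sphere hconn o hc hm
  set W : Finset V := (sph_fin hconn o hc o ρ).toFinset with hW
  have hWmem : ∀ {w : V}, w ∈ W ↔ G.dist o w = ρ := by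
    intro w
    rw [hW, Set.Finite.mem_toFinset]
    exact Iff.rfl
  have hWcard : W.card ≤ 2*c := by
    have h0 : (sphS G o ρ).ncard = W.card := Set.ncard_eq_toFinset_card _ _
    omega
  obtain ⟨b, hb⟩ := exists_dist_eq hconn o hc o (6*m)
  -- scale pigeonhole
  set J : Finset ℕ := (Finset.range T).filter
    (fun j => ∃ u ∈ W, ∃ v ∈ W, τs j < G.dist u v ∧ G.dist u v ≤ τs (j+1)) with hJ
  set fpair : V × V → ℕ := fun p => Nat.findGreatest (fun j => τs j < G.dist p.1 p.2) T with hfp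
  have hJsub : J ⊆ (W ×ˢ W).image fpair := by
    intro j hj
    simp only [hJ, Finset.mem_filter, Finset.mem_range] at hj
    obtain ⟨hjT, u, hu, v, hv, h1, h2⟩ := hj
    refine Finset.mem_image.mpr ⟨(u,v), Finset.mem_product.mpr ⟨hu, hv⟩, ?_⟩
    have hjT' : j ≤ T := le_of_lt hjT
    show Nat.findGreatest (fun k => τs k < G.dist u v) T = j
    apply le_antisymm
    · by_contra hcon
      push_neg at hcon
      have hP2 : τs (Nat.findGreatest (fun k => τs k < G.dist u v) T) < G.dist u v :=
        Nat.findGreatest_spec (P := fun k => τs k < G.dist u v) hjT' h1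
      have hmono2 : τs (j+1) ≤ τs (Nat.findGreatest (fun k => τs k < G.dist u v) T) :=
        hτmono hcon
      omega
    · exact Nat.le_findGreatest hjT' h1
  have hJcard : J.card < T := by
    have h1 : ((W ×ˢ W).image fpair).card ≤ W.card * W.card := by
      refine le_trans (Finset.card_image_le) ?_
      rw [Finset.card_product]
    have h2 : W.card * W.card ≤ 2*c*(2*c) := Nat.mul_le_mul hWcard hWcard
    have := Finset.card_le_card hJsub
    have hTT : 2*c*(2*c) < T := by rw [hT]; ring_nf; omega
    omega
  have hgood : ∃ j ∈ Finset.range T, j ∉ J := by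
    by_contra hcon
    push_neg at hcon
    have hsub : Finset.range T ⊆ J := fun j hj => hcon j hj
    have := Finset.card_le_card hsub
    rw [Finset.card_range] at this
    omega
  obtain ⟨j, hjT, hjJ⟩ := hgood
  rw [Finset.mem_range] at hjT
  have hpair : ∀ u ∈ W, ∀ v ∈ W,
      G.dist u v ≤ τs j ∨ Rf (2*(τs j)) + Lf (2*(τs j)) + 2*(τs j) + 2 < G.dist u v := by
    intro u hu v hv
    by_contra hcon
    push_neg at hcon
    apply hjJ
    rw [hJ, Finset.mem_filter, Finset.mem_range]
    refine ⟨hjT, u, hu, v, hv, ?_, ?_⟩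
    · omega
    · rw [hτsucc]
      simp only [hγdef]
      omega
  have hscale : τs (j+1) ≤ τs T := hτmono hjT
  have hτj1 : Rf (2*(τs j)) + Lf (2*(τs j)) + 2*(τs j) + 2 = τs (j+1) := by
    rw [hτsucc]
  have haW : ∀ w ∈ W, Rf (2*(τs j)) + Lf (2*(τs j)) + 2*(τs j) + 2 < G.dist w o := by
    intro w hw
    have h1 : G.dist o w = ρ := hWmem.mp hw
    have h2 : G.dist w o = G.dist o w := SimpleGraph.dist_comm ..
    omega
  have hbW : ∀ w ∈ W, Rf (2*(τs j)) + Lf (2*(τs j)) + 2*(τs j) + 2 < G.dist w b := by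
    intro w hw
    have h1 : G.dist o w = ρ := hWmem.mp hw
    have h2 : G.dist o b ≤ G.dist o w + G.dist w b := hconn.dist_triangle
    omega
  have hreach : RA G (∅ : Set V) o b := ⟨(hconn o b).some, by simp⟩
  have hsurg := surgery hconn hrle hdet (τs j) W hpair ∅ (by simp) haW hbW hreach
  obtain ⟨q, hq⟩ := hsurg
  obtain ⟨x, hx, hxd⟩ := exists_dist_eq_on_walk hconn o q (ρ := ρ)
    (by rw [SimpleGraph.dist_self]; omega) (by rw [hb]; omega)
  refine hq x hx (Or.inr ?_)
  rw [Finset.mem_coe]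
  exact hWmem.mpr hxd

end OneEnd

section Counting

variable [∀ v : V, Fintype (G.neighborSet v)]

lemma componentCompl_finite_of_finite (hconn : G.Connected) {S : Set V} (hS : S.Finite) :
    Finite (G.ComponentCompl S) := by
  classical
  haveI : Fact G.Preconnected := ⟨hconn.preconnected⟩
  have h : Finite (G.ComponentCompl (hS.toFinset : Set V)) := inferInstance
  rwa [Set.Finite.coe_toFinset] at h

/-- Second first-hit lemma: walk from outside into `S` has a last vertex before entering. -/
lemma exists_first_hit' {S : Set V} {a b : V} (p : G.Walk a b) :
    a ∉ S → b ∈ S → ∃ y u : V, G.Adj y u ∧ y ∉ S ∧ u ∈ S ∧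
      ∃ q : G.Walk a y, ∀ x ∈ q.support, x ∉ S := by
  induction p with
  | nil => intro ha hb; exact absurd hb ha
  | @cons a a' b h q ih =>
    intro ha hb
    by_cases ha' : a' ∈ S
    · exact ⟨a, a', h, ha, ha', Walk.nil, by simp [ha]⟩
    · obtain ⟨y, u, hadj, hy, hu, q', hq'⟩ := ih ha' hb
      refine ⟨y, u, hadj, hy, hu, Walk.cons h q', fun x hx => ?_⟩
      simp only [Walk.support_cons, List.mem_cons] at hx
      rcases hx with rfl | hx
      · exact ha
      · exact hq' x hx

/-- Infinite components surject along `hom`. -/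
lemma hom_surj_on_infinite (hconn : G.Connected) {K L : Set V} (hKL : K ⊆ L) (hL : L.Finite)
    {D : G.ComponentCompl K} (hD : D.supp.Infinite) :
    ∃ C : G.ComponentCompl L, C.supp.Infinite ∧ C.hom hKL = D := by
  classical
  haveI := componentCompl_finite_of_finite hconn hL
  by_contra hcon
  push_neg at hcon
  have hsub : D.supp ⊆ L ∪ ⋃ (C : {C : G.ComponentCompl L // C.hom hKL = D}), (C : G.ComponentCompl L).supp := by
    intro v hv
    by_cases hvL : v ∈ L
    · exact Or.inl hvL
    · right
      obtain ⟨hvK, hmk⟩ := hv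
      refine Set.mem_iUnion.mpr ⟨⟨G.componentComplMk hvL, ?_⟩, G.componentComplMk_mem hvL⟩
      rw [ComponentCompl.hom_mk]
      exact hmk
  apply hD
  refine Set.Finite.subset (hL.union (Set.finite_iUnion fun C => ?_)) hsub
  by_contra hCinf
  exact hcon C.val hCinf C.prop

/-- Count of infinite components, for the complement of a finite set. -/
noncomputable def nIC (G : SimpleGraph V) (K : Set V) : ℕ :=
  Nat.card {C : G.ComponentCompl K // C.supp.Infinite}

lemma nIC_mono (hconn : G.Connected) {K L : Set V} (hKL : K ⊆ L) (hL : L.Finite) :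
    nIC G K ≤ nIC G L := by
  classical
  haveI := componentCompl_finite_of_finite hconn hL
  haveI : Finite {C : G.ComponentCompl L // C.supp.Infinite} := Subtype.finite
  refine Nat.card_le_card_of_surjective
    (fun C => ⟨(C : {C : G.ComponentCompl L // C.supp.Infinite}).val.hom hKL,
      ComponentCompl.hom_infinite _ _ C.prop⟩) ?_
  rintro ⟨D, hD⟩
  obtain ⟨C, hCinf, hChom⟩ := hom_surj_on_infinite hconn hKL hL hD
  exact ⟨⟨C, hCinf⟩, Subtype.ext hChom⟩

variable (hconn : G.Connected) (o : V) {c : ℕ}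
  (hc : ∀ n : ℕ, {v : V | G.dist o v ≤ n}.Finite ∧ {v : V | G.dist o v ≤ n}.ncard ≤ c * n + c)

include hconn hc in
/-- each infinite component outside a ball has a vertex on the next sphere. -/
lemma nIC_le_sphere (x : V) (m : ℕ) :
    nIC G (ballS G x m) ≤ (sphS G x (m+1)).ncard := by
  classical
  haveI := componentCompl_finite_of_finite hconn (ball_fin hconn o hc x m)
  haveI : Finite ↥(sphS G x (m+1)) := (sph_fin hconn o hc x (m+1)).to_subtype
  have hexists : ∀ C : {C : G.ComponentCompl (ballS G x m) // C.supp.Infinite},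
      ∃ y, y ∈ C.val.supp ∧ G.dist x y = m + 1 := by
    rintro ⟨C, hC⟩
    obtain ⟨v, hvK, hmk⟩ := C.exists_eq_mk
    obtain ⟨p⟩ := hconn v x
    have hxball : x ∈ ballS G x m := by
      simp only [ballS, Set.mem_setOf_eq, SimpleGraph.dist_self]
      omega
    obtain ⟨y, u, hadj, hy, hu, q, hq⟩ := exists_first_hit' p hvK hxball
    have hdy : G.dist x y = m + 1 := by
      have h1 : G.dist x u ≤ m := hu
      have h2 : ¬ G.dist x y ≤ m := hy
      have h3 : G.dist x y ≤ G.dist x u + G.dist u y := hconn.dist_triangle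
      have h4 : G.dist u y ≤ 1 := by simpa using SimpleGraph.dist_le hadj.symm.toWalk
      omega
    have hyC : y ∈ C.supp := by
      rw [← hmk]
      exact (mem_supp_iff_RA hvK y).mpr ⟨q, hq⟩
    exact ⟨y, hyC, hdy⟩
  choose f hf1 hf2 using hexists
  have hinj : Function.Injective (fun C => (⟨f C, hf2 C⟩ : ↥(sphS G x (m+1)))) := by
    intro C C' heq
    simp only [Subtype.mk_eq_mk] at heq
    by_contra hne
    have hneval : C.val ≠ C'.val := fun h => hne (Subtype.ext h)
    have hdisj := ComponentCompl.pairwise_disjoint (G := G) (K := ballS G x m) hneval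
    exact (Set.disjoint_left.mp hdisj) (hf1 C) (by rw [show f C = f C' from congrArg Subtype.val heq]; exact hf1 C')
  calc nIC G (ballS G x m) ≤ Nat.card ↥(sphS G x (m+1)) := Nat.card_le_card_of_injective _ hinj
    _ = (sphS G x (m+1)).ncard := Nat.card_coe_set_eq _

include hconn hc in
lemma nIC_ball_le_iso (x y : V) (m : ℕ) (φ : G ≃g G) (hφ : φ x = y) :
    nIC G (ballS G x m) ≤ nIC G (ballS G y m) := by
  classical
  haveI := componentCompl_finite_of_finite hconn (ball_fin hconn o hc x m)
  haveI := componentCompl_finite_of_finite hconn (ball_fin hconn o hc y m)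
  haveI : Finite {C : G.ComponentCompl (ballS G y m) // C.supp.Infinite} := Subtype.finite
  have hrep : ∀ C : {C : G.ComponentCompl (ballS G x m) // C.supp.Infinite},
      ∃ v, ∃ (hv : v ∉ ballS G x m), G.componentComplMk hv = C.val := by
    rintro ⟨C, hC⟩
    exact C.exists_eq_mk
  choose rep hrep1 hrep2 using hrep
  have himg : ∀ v : V, v ∉ ballS G x m → φ v ∉ ballS G y m := by
    intro v hv hmem
    apply hv
    have h2 : G.dist (φ x) (φ v) = G.dist x v := iso_dist_eq φ x v
    rw [hφ] at h2
    exact le_trans (le_of_eq h2.symm) hmem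
  have hdeep : ∀ C : {C : G.ComponentCompl (ballS G x m) // C.supp.Infinite},
      (G.componentComplMk (himg _ (hrep1 C))).supp.Infinite := by
    intro C
    rw [supp_infinite_iff_deep hconn o hc (himg _ (hrep1 C))]
    have h1 : deep G (ballS G x m) (rep C) := by
      rw [← supp_infinite_iff_deep hconn o hc (hrep1 C)]
      rw [hrep2 C]
      exact C.prop
    have h2 := deep_map φ h1
    rwa [iso_image_ballS, hφ] at h2
  set F : {C : G.ComponentCompl (ballS G x m) // C.supp.Infinite} →
      {C : G.ComponentCompl (ballS G y m) // C.supp.Infinite} :=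
    fun C => ⟨G.componentComplMk (himg _ (hrep1 C)), hdeep C⟩ with hF
  have hinj : Function.Injective F := by
    intro C C' heq
    simp only [hF, Subtype.mk_eq_mk] at heq
    -- φ (rep C') ∈ supp of mk (φ (rep C))
    have hmem : φ (rep C') ∈ (G.componentComplMk (himg _ (hrep1 C))).supp := by
      rw [heq]
      exact G.componentComplMk_mem _
    have hRA : RA G (ballS G y m) (φ (rep C)) (φ (rep C')) :=
      (mem_supp_iff_RA _ _).mp hmem
    have hRA2 := hRA.map φ.symm
    have hsymm : φ.symm '' ballS G y m = ballS G x m := by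
      have h0 := iso_image_ballS φ.symm y m
      have hyx : φ.symm y = x := by rw [← hφ]; simp
      rw [hyx] at h0
      exact h0
    rw [hsymm] at hRA2
    simp only [RelIso.symm_apply_apply] at hRA2
    have hmk : G.componentComplMk (hrep1 C) = G.componentComplMk (hrep1 C') :=
      mk_eq_of_RA hRA2 _ _
    apply Subtype.ext
    rw [← hrep2 C, ← hrep2 C', hmk]
  exact Nat.card_le_card_of_injective F hinj

include hconn hc in
lemma nIC_ball_eq (htrans : ∀ u v : V, ∃ φ : G ≃g G, φ u = v) (x : V) (m : ℕ) :
    nIC G (ballS G x m) = nIC G (ballS G o m) := by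
  obtain ⟨φ, hφ⟩ := htrans x o
  obtain ⟨ψ, hψ⟩ := htrans o x
  exact le_antisymm (nIC_ball_le_iso hconn o hc x o m φ hφ)
    (nIC_ball_le_iso hconn o hc o x m ψ hψ)

/-- A component staying disjoint from a larger set remains a component. -/
lemma stay_comp {K L : Set V} (hKL : K ⊆ L) (D : G.ComponentCompl K)
    (hdisj : Disjoint D.supp L) : ∃ C : G.ComponentCompl L, C.supp = D.supp := by
  obtain ⟨v, hvK, hmk⟩ := D.exists_eq_mk
  have hvL : v ∉ L := by
    intro hvL
    exact Set.disjoint_left.mp hdisj (hmk ▸ G.componentComplMk_mem hvK) hvL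
  refine ⟨G.componentComplMk hvL, Set.Subset.antisymm ?_ ?_⟩
  · intro w hw
    have hRA : RA G L v w := (mem_supp_iff_RA hvL w).mp hw
    rw [← hmk]
    exact (mem_supp_iff_RA hvK w).mpr (hRA.mono hKL)
  · intro w hw
    rw [← hmk] at hw
    obtain ⟨p, hp⟩ := (mem_supp_iff_RA hvK w).mp hw
    refine (mem_supp_iff_RA hvL w).mpr ⟨p, fun z hz hzL => ?_⟩
    have hzD : z ∈ D.supp := by
      rw [← hmk]
      exact (mem_supp_iff_RA hvK z).mpr (RA.of_mem_support p hp hz)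
    exact Set.disjoint_left.mp hdisj hzD hzL

include hconn in
lemma ball_RA {x : V} {m : ℕ} {w : V} (hw : w ∈ ballS G x m) {A : Set V}
    (hdisj : Disjoint (ballS G x m) A) : RA G A x w := by
  obtain ⟨p, hp⟩ := (hconn x w).exists_walk_length_eq_dist
  refine ⟨p, fun z hz hzA => ?_⟩
  have h1 : G.dist x z ≤ p.length := dist_start_le_of_mem_support p hz
  have h2 : z ∈ ballS G x m := by
    have h3 : G.dist x w ≤ m := hw
    have : G.dist x z ≤ m := by omega
    exact this
  exact Set.disjoint_left.mp hdisj h2 hzA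


include hconn hc in
lemma nIC_ball_mono (m m' : ℕ) (h : m ≤ m') :
    nIC G (ballS G o m) ≤ nIC G (ballS G o m') :=
  nIC_mono hconn (ballS_mono h) (ball_fin hconn o hc o m')

include hconn hc in
lemma exists_stab [Infinite V] :
    ∃ m₀ : ℕ, ∀ m, m₀ ≤ m → nIC G (ballS G o m) = nIC G (ballS G o m₀) := by
  classical
  have hbound : ∀ m, nIC G (ballS G o m) ≤ 2*c := by
    intro m
    set m' := max (c+1) m with hm'
    have hcm : c < m' := by
      have := le_max_left (c+1) m
      omega
    obtain ⟨ρ, h1, h2, h3⟩ := exists_small_sphere hconn o hc hcm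
    have hmm' : m ≤ m' := le_max_right _ _
    have hmono := nIC_ball_mono hconn o hc m (ρ - 1) (by omega)
    have hsph := nIC_le_sphere hconn o hc o (ρ-1)
    have hρeq : ρ - 1 + 1 = ρ := by omega
    rw [hρeq] at hsph
    omega
  set Sv : Set ℕ := Set.range (fun m => nIC G (ballS G o m)) with hSv
  have hbdd : BddAbove Sv := ⟨2*c, by rintro n ⟨m, rfl⟩; exact hbound m⟩
  have hne : Sv.Nonempty := ⟨_, ⟨0, rfl⟩⟩
  obtain ⟨m₀, hm₀⟩ := Nat.sSup_mem hne hbdd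
  have hm₀' : nIC G (ballS G o m₀) = sSup Sv := hm₀
  refine ⟨m₀, fun m hm => ?_⟩
  apply le_antisymm
  · rw [hm₀']
    exact le_csSup hbdd ⟨m, rfl⟩
  · exact nIC_ball_mono hconn o hc m₀ m hm

include hconn hc in
lemma two_le_nIC
    (hTwo : ∃ S : Set V, S.Finite ∧ ∃ u v, deep G S u ∧ deep G S v ∧ ¬ RA G S u v) :
    ∃ m₁ : ℕ, ∀ m, m₁ ≤ m → 2 ≤ nIC G (ballS G o m) := by
  classical
  obtain ⟨S, hSfin, u, v, hu, hv, hRA⟩ := hTwo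
  set m₁ := hSfin.toFinset.sup (G.dist o) with hm₁
  have hsub : S ⊆ ballS G o m₁ := fun z hz =>
    show G.dist o z ≤ m₁ from Finset.le_sup (hSfin.mem_toFinset.mpr hz)
  refine ⟨m₁, fun m hm => ?_⟩
  have h2 : 2 ≤ nIC G S := by
    haveI := componentCompl_finite_of_finite hconn hSfin
    haveI : Finite {C : G.ComponentCompl S // C.supp.Infinite} := Subtype.finite
    have huS : u ∉ S := hu.not_mem
    have hvS : v ∉ S := hv.not_mem
    have hne : G.componentComplMk huS ≠ G.componentComplMk hvS := by
      intro heq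
      apply hRA
      have hmem : v ∈ (G.componentComplMk huS).supp := by
        rw [heq]
        exact G.componentComplMk_mem hvS
      exact (mem_supp_iff_RA huS v).mp hmem
    set Cu : {C : G.ComponentCompl S // C.supp.Infinite} :=
      ⟨G.componentComplMk huS, (supp_infinite_iff_deep hconn o hc huS).mpr hu⟩ with hCu
    set Cv : {C : G.ComponentCompl S // C.supp.Infinite} :=
      ⟨G.componentComplMk hvS, (supp_infinite_iff_deep hconn o hc hvS).mpr hv⟩ with hCv
    have hinj : Function.Injective (fun b : Bool => if b then Cu else Cv) := by
      intro b b' heq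
      cases b <;> cases b' <;> simp only [if_true, if_false, Bool.true_eq_false,
        Bool.false_eq_true] at heq ⊢
      · exact absurd (Subtype.mk_eq_mk.mp heq.symm) hne
      · exact absurd (Subtype.mk_eq_mk.mp heq) hne
    calc 2 = Nat.card Bool := by
          rw [Nat.card_eq_fintype_card, Fintype.card_bool]
      _ ≤ Nat.card {C : G.ComponentCompl S // C.supp.Infinite} :=
          Nat.card_le_card_of_injective _ hinj
  calc 2 ≤ nIC G S := h2
    _ ≤ nIC G (ballS G o m) :=
      nIC_mono hconn (le_trans hsub (ballS_mono hm)) (ball_fin hconn o hc o m)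


lemma card_compl_singleton {α : Type*} [Finite α] (a : α) :
    Nat.card {x : α // x ≠ a} = Nat.card α - 1 := by
  classical
  haveI := Fintype.ofFinite α
  have h1 : Nat.card {x : α // x ≠ a} = Fintype.card {x : α // ¬ x = a} := by
    rw [Nat.card_eq_fintype_card]
  have h2 := Fintype.card_subtype_compl (fun x : α => x = a)
  rw [Fintype.card_subtype_eq] at h2
  rw [h1, h2, Nat.card_eq_fintype_card]

include hconn hc in
lemma nIC_le_two [Infinite V] (htrans : ∀ u v : V, ∃ φ : G ≃g G, φ u = v) {m₀ : ℕ}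
    (hstab : ∀ m, m₀ ≤ m → nIC G (ballS G o m) = nIC G (ballS G o m₀)) :
    nIC G (ballS G o m₀) ≤ 2 := by
  classical
  by_contra hN
  push_neg at hN
  obtain ⟨R, hRm, habs⟩ := exists_Rbound hconn o hc htrans m₀
  haveI hfin₀ := componentCompl_finite_of_finite hconn (ball_fin hconn o hc o m₀)
  haveI : Finite {C : G.ComponentCompl (ballS G o m₀) // C.supp.Infinite} := Subtype.finite
  have hpos : 0 < Nat.card {C : G.ComponentCompl (ballS G o m₀) // C.supp.Infinite} := by
    have : nIC G (ballS G o m₀) = Nat.card {C : G.ComponentCompl (ballS G o m₀) // C.supp.Infinite} := rfl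
    omega
  obtain ⟨⟨C₁, hC₁⟩⟩ := Nat.card_pos_iff.mp hpos |>.1
  obtain ⟨x, hxC, hxfar⟩ : ∃ x ∈ C₁.supp, R + 2*m₀ < G.dist o x := by
    obtain ⟨x, hx⟩ := (hC₁.diff (ball_fin hconn o hc o (R + 2*m₀))).nonempty
    refine ⟨x, hx.1, ?_⟩
    have := hx.2
    simp only [ballS, Set.mem_setOf_eq, not_le] at this
    omega
  have hdisjballs : Disjoint (ballS G o m₀) (ballS G x m₀) := by
    rw [Set.disjoint_left]
    intro z hz hz'
    have h1 : G.dist o z ≤ m₀ := hz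
    have h2 : G.dist x z ≤ m₀ := hz'
    have h3 : G.dist o x ≤ G.dist o z + G.dist z x := hconn.dist_triangle
    have h4 : G.dist z x = G.dist x z := SimpleGraph.dist_comm ..
    omega
  have hballxC : ballS G x m₀ ⊆ C₁.supp := by
    intro w hw
    have hRAxw : RA G (ballS G o m₀) x w := ball_RA hconn hw hdisjballs.symm
    obtain ⟨hxK, hmkx⟩ := hxC
    rw [← hmkx]
    exact (mem_supp_iff_RA hxK w).mpr hRAxw
  have hodeep : deep G (ballS G x m₀) o := by
    by_contra hnd
    have h1 := habs x o hnd
    have hcomm : G.dist x o = G.dist o x := SimpleGraph.dist_comm ..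
    omega
  have honotball : o ∉ ballS G x m₀ := hodeep.not_mem
  set D₁ : G.ComponentCompl (ballS G x m₀) := G.componentComplMk honotball with hD₁
  have hD₁inf : D₁.supp.Infinite := (supp_infinite_iff_deep hconn o hc honotball).mpr hodeep
  have hballoD : ballS G o m₀ ⊆ D₁.supp := fun w hw =>
    (mem_supp_iff_RA honotball w).mpr (ball_RA hconn hw hdisjballs)
  -- supp of any component ≠ C₁ of the o-ball complement is inside D₁
  have hsuppD₁ : ∀ C : G.ComponentCompl (ballS G o m₀), C ≠ C₁ → C.supp ⊆ D₁.supp := by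
    intro C hne v hv
    have hCdisjx : Disjoint C.supp (ballS G x m₀) := by
      refine Set.disjoint_left.mpr fun z hz hz' => ?_
      have hzC₁ : z ∈ C₁.supp := hballxC hz'
      exact Set.disjoint_left.mp (ComponentCompl.pairwise_disjoint hne) hz hzC₁
    obtain ⟨⟨c₁, c₂⟩, hc₁, hc₂, hadj⟩ :=
      C.exists_adj_boundary_pair hconn.preconnected ⟨o, by
        simp only [ballS, Set.mem_setOf_eq, SimpleGraph.dist_self]; omega⟩
    have hc₁supp : c₁ ∈ C.supp := hc₁
    obtain ⟨hvK, hmkv⟩ := hv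
    have hRA1 : RA G (ballS G x m₀) v c₁ := by
      have hc₁supp' : c₁ ∈ (G.componentComplMk hvK).supp := by rw [hmkv]; exact hc₁supp
      obtain ⟨p, hp⟩ := (mem_supp_iff_RA hvK c₁).mp hc₁supp'
      refine ⟨p, fun z hz hzx => ?_⟩
      have hzC : z ∈ C.supp := by
        rw [← hmkv]
        exact (mem_supp_iff_RA hvK z).mpr (RA.of_mem_support p hp hz)
      exact Set.disjoint_left.mp hCdisjx hzC hzx
    have hc₁x : c₁ ∉ ballS G x m₀ := fun h => Set.disjoint_left.mp hCdisjx hc₁supp h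
    have hc₂x : c₂ ∉ ballS G x m₀ := fun h => Set.disjoint_left.mp hdisjballs hc₂ h
    have hRA2 : RA G (ballS G x m₀) c₁ c₂ := RA.adj hadj hc₁x hc₂x
    have hRA3 : RA G (ballS G x m₀) o c₂ := ball_RA hconn hc₂ hdisjballs
    have hRAfin : RA G (ballS G x m₀) o v := (hRA3.trans hRA2.symm).trans hRA1.symm
    exact (mem_supp_iff_RA honotball v).mpr hRAfin
  -- count at x equals count at o
  have hNx : nIC G (ballS G x m₀) = nIC G (ballS G o m₀) := nIC_ball_eq hconn o hc htrans x m₀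
  -- the doubled set
  set Kb : Set V := ballS G o m₀ ∪ ballS G x m₀ with hKb
  have hKbfin : Kb.Finite := (ball_fin hconn o hc o m₀).union (ball_fin hconn o hc x m₀)
  haveI hfinKb := componentCompl_finite_of_finite hconn hKbfin
  haveI : Finite {C : G.ComponentCompl Kb // C.supp.Infinite} := Subtype.finite
  haveI hfinx := componentCompl_finite_of_finite hconn (ball_fin hconn o hc x m₀)
  haveI : Finite {C : G.ComponentCompl (ballS G x m₀) // C.supp.Infinite} := Subtype.finite
  have hstayo : ∀ C : G.ComponentCompl (ballS G o m₀), C ≠ C₁ → Disjoint C.supp Kb := by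
    intro C hne
    rw [hKb, Set.disjoint_union_right]
    refine ⟨?_, ?_⟩
    · exact (C.disjoint_right).symm
    · refine Set.disjoint_left.mpr fun z hz hz' => ?_
      exact Set.disjoint_left.mp (ComponentCompl.pairwise_disjoint hne) hz (hballxC hz')
  have hstayx : ∀ D : G.ComponentCompl (ballS G x m₀), D ≠ D₁ → Disjoint D.supp Kb := by
    intro D hne
    rw [hKb, Set.disjoint_union_right]
    refine ⟨?_, ?_⟩
    · refine Set.disjoint_left.mpr fun z hz hz' => ?_
      exact Set.disjoint_left.mp (ComponentCompl.pairwise_disjoint hne) hz (hballoD hz')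
    · exact (D.disjoint_right).symm
  -- the two injections
  set ICo := {C : G.ComponentCompl (ballS G o m₀) // C.supp.Infinite} with hICo
  set ICx := {C : G.ComponentCompl (ballS G x m₀) // C.supp.Infinite} with hICx
  set A := {C : ICo // C.val ≠ C₁} with hA
  set B := {D : ICx // D.val ≠ D₁} with hB
  have hexA : ∀ a : A, ∃ E : G.ComponentCompl Kb, E.supp = a.val.val.supp :=
    fun a => stay_comp Set.subset_union_left a.val.val (hstayo _ a.prop)
  have hexB : ∀ b : B, ∃ E : G.ComponentCompl Kb, E.supp = b.val.val.supp :=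
    fun b => stay_comp Set.subset_union_right b.val.val (hstayx _ b.prop)
  choose FA hFA using hexA
  choose FB hFB using hexB
  set F : A ⊕ B → {C : G.ComponentCompl Kb // C.supp.Infinite} :=
    Sum.elim (fun a => ⟨FA a, by rw [hFA]; exact a.val.prop⟩)
      (fun b => ⟨FB b, by rw [hFB]; exact b.val.prop⟩) with hF
  have hinj : Function.Injective F := by
    have hAB : ∀ (a : A) (b : B), FA a ≠ FB b := by
      intro a b heq
      have h1 : a.val.val.supp = b.val.val.supp := by
        rw [← hFA a, ← hFB b, heq]
      have h2 : a.val.val.supp ⊆ D₁.supp := hsuppD₁ _ a.prop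
      have h3 : Disjoint b.val.val.supp D₁.supp :=
        ComponentCompl.pairwise_disjoint b.prop
      obtain ⟨z, hz⟩ := a.val.val.nonempty
      exact Set.disjoint_left.mp h3 (h1 ▸ hz) (h2 hz)
    rintro (a | b) (a' | b') heq
    · simp only [hF, Sum.elim_inl, Subtype.mk_eq_mk] at heq
      have h1 : a.val.val.supp = a'.val.val.supp := by
        rw [← hFA a, ← hFA a', heq]
      have h2 : a.val.val = a'.val.val := ComponentCompl.supp_inj.mp h1
      apply congrArg
      exact Subtype.ext (Subtype.ext h2)
    · simp only [hF, Sum.elim_inl, Sum.elim_inr, Subtype.mk_eq_mk] at heq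
      exact absurd heq (hAB a b')
    · simp only [hF, Sum.elim_inl, Sum.elim_inr, Subtype.mk_eq_mk] at heq
      exact absurd heq.symm (hAB a' b)
    · simp only [hF, Sum.elim_inr, Subtype.mk_eq_mk] at heq
      have h1 : b.val.val.supp = b'.val.val.supp := by
        rw [← hFB b, ← hFB b', heq]
      have h2 : b.val.val = b'.val.val := ComponentCompl.supp_inj.mp h1
      apply congrArg
      exact Subtype.ext (Subtype.ext h2)
  -- cardinalities
  have hcardA : Nat.card A = nIC G (ballS G o m₀) - 1 := by
    have h0 : Nat.card {C : ICo // C ≠ ⟨C₁, hC₁⟩} = Nat.card ICo - 1 :=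
      card_compl_singleton _
    have h1 : Nat.card A = Nat.card {C : ICo // C ≠ ⟨C₁, hC₁⟩} := by
      apply Nat.card_congr
      refine Equiv.subtypeEquiv (Equiv.refl _) fun C => ?_
      simp only [Equiv.refl_apply, hA]
      constructor
      · intro h h'
        exact h (by rw [h'])
      · intro h h'
        exact h (Subtype.ext h')
    rw [h1, h0]
    rfl
  have hcardB : Nat.card B = nIC G (ballS G o m₀) - 1 := by
    have h0 : Nat.card {D : ICx // D ≠ ⟨D₁, hD₁inf⟩} = Nat.card ICx - 1 :=
      card_compl_singleton _
    have h1 : Nat.card B = Nat.card {D : ICx // D ≠ ⟨D₁, hD₁inf⟩} := by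
      apply Nat.card_congr
      refine Equiv.subtypeEquiv (Equiv.refl _) fun D => ?_
      simp only [Equiv.refl_apply, hB]
      constructor
      · intro h h'
        exact h (by rw [h'])
      · intro h h'
        exact h (Subtype.ext h')
    rw [h1, h0, ← hNx]
    rfl
  haveI : Finite A := Subtype.finite
  haveI : Finite B := Subtype.finite
  have hsum : Nat.card (A ⊕ B) = Nat.card A + Nat.card B := Nat.card_sum
  have hle : Nat.card (A ⊕ B) ≤ Nat.card {C : G.ComponentCompl Kb // C.supp.Infinite} :=
    Nat.card_le_card_of_injective F hinj
  set M := G.dist o x + m₀ with hM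
  have hKbsub : Kb ⊆ ballS G o M := by
    rw [hKb]
    intro z hz
    rcases hz with hz | hz
    · have h1 : G.dist o z ≤ m₀ := hz
      have : G.dist o z ≤ M := by omega
      exact this
    · have h1 : G.dist x z ≤ m₀ := hz
      have h2 : G.dist o z ≤ G.dist o x + G.dist x z := hconn.dist_triangle
      have : G.dist o z ≤ M := by omega
      exact this
  have hKbM : nIC G Kb ≤ nIC G (ballS G o M) :=
    nIC_mono hconn hKbsub (ball_fin hconn o hc o M)
  have hMN : nIC G (ballS G o M) = nIC G (ballS G o m₀) := hstab M (by omega)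
  have hKbcard : Nat.card {C : G.ComponentCompl Kb // C.supp.Infinite} = nIC G Kb := rfl
  have hNo : Nat.card ICo = nIC G (ballS G o m₀) := rfl
  omega

end Counting

section EndsCount

open CategoryTheory Opposite

variable [∀ v : V, Fintype (G.neighborSet v)]
variable (hconn : G.Connected) (o : V) {c : ℕ}
  (hc : ∀ n : ℕ, {v : V | G.dist o v ≤ n}.Finite ∧ {v : V | G.dist o v ≤ n}.ncard ≤ c * n + c)

include hconn hc in
lemma card_end_eq {m₀ : ℕ}
    (hstab : ∀ m, m₀ ≤ m → nIC G (ballS G o m) = nIC G (ballS G o m₀)) :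
    Nat.card G.end = nIC G (ballS G o m₀) := by
  classical
  haveI : Fact G.Preconnected := ⟨hconn.preconnected⟩
  set Kf : ℕ → Finset V := fun m => (ball_fin hconn o hc o m).toFinset with hKfdef
  have hKfco : ∀ m, (Kf m : Set V) = ballS G o m := fun m => Set.Finite.coe_toFinset _
  have hKsub : ∀ {m m' : ℕ}, m ≤ m' → ((Kf m : Set V) ⊆ (Kf m' : Set V)) := by
    intro m m' h
    rw [hKfco, hKfco]
    exact ballS_mono h
  have hKsubF : ∀ {m m' : ℕ}, m ≤ m' → Kf m ≤ Kf m' := fun h => Finset.coe_subset.mp (hKsub h)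
  have hCCfin : ∀ m, Finite (G.ComponentCompl (Kf m : Set V)) :=
    fun m => componentCompl_finite_of_finite hconn (Kf m).finite_toSet
  have hcardm : ∀ m, m₀ ≤ m → nIC G (Kf m : Set V) = nIC G (Kf m₀ : Set V) := by
    intro m hm
    rw [hKfco, hKfco]
    exact hstab m hm
  -- uniqueness of infinite lifts between stabilized levels
  have huniq : ∀ (m : ℕ) (hm : m₀ ≤ m) (C C' : G.ComponentCompl (Kf m : Set V)),
      C.supp.Infinite → C'.supp.Infinite →
      C.hom (hKsub hm) = C'.hom (hKsub hm) → C = C' := by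
    intro m hm C C' hC hC' hhom
    haveI := hCCfin m
    haveI := hCCfin m₀
    haveI : Finite {D : G.ComponentCompl (Kf m : Set V) // D.supp.Infinite} := Subtype.finite
    set Φ : {D : G.ComponentCompl (Kf m : Set V) // D.supp.Infinite} →
        {D : G.ComponentCompl (Kf m₀ : Set V) // D.supp.Infinite} :=
      fun D => ⟨D.val.hom (hKsub hm), ComponentCompl.hom_infinite _ _ D.prop⟩ with hΦ
    have hsurj : Function.Surjective Φ := by
      rintro ⟨D, hD⟩
      obtain ⟨E, hEinf, hEhom⟩ := hom_surj_on_infinite hconn (hKsub hm) (Kf m).finite_toSet hD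
      exact ⟨⟨E, hEinf⟩, Subtype.ext hEhom⟩
    have hbij := hsurj.bijective_of_nat_card_le (le_of_eq (hcardm m hm))
    have := hbij.injective (a₁ := ⟨C, hC⟩) (a₂ := ⟨C', hC'⟩) (Subtype.ext hhom)
    exact Subtype.mk_eq_mk.mp this
  -- end values are infinite
  have hendinf : ∀ (e : ↥G.end) (K : (Finset V)ᵒᵖ), (e.val K).supp.Infinite := by
    intro e K
    refine (e.val K).infinite_iff_in_all_ranges.mpr fun L h => ?_
    exact ⟨e.val (Opposite.op L), e.prop (CategoryTheory.opHomOfLE h)⟩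
  -- sections are determined by values on balls
  have hdet : ∀ (e : ↥G.end) (K : Finset V) (m : ℕ) (h : K ≤ Kf m)
      (hsub : (K : Set V) ⊆ (Kf m : Set V)),
      e.val (op K) = (e.val (op (Kf m))).hom hsub := by
    intro e K m h hsub
    exact (e.prop (CategoryTheory.opHomOfLE h)).symm
  have hμ : ∀ K : (Finset V)ᵒᵖ,
      ((K.unop : Finset V) : Set V) ⊆ (Kf (m₀ + K.unop.sup (G.dist o)) : Set V) := by
    intro K z hz
    have h1 : G.dist o z ≤ K.unop.sup (G.dist o) := Finset.le_sup hz
    rw [hKfco]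
    show G.dist o z ≤ m₀ + K.unop.sup (G.dist o)
    omega
  have hμF : ∀ K : (Finset V)ᵒᵖ, (K.unop : Finset V) ≤ Kf (m₀ + K.unop.sup (G.dist o)) :=
    fun K => fun z hz => by
      have := hμ K hz
      exact this
  set J : ↥G.end → {C : G.ComponentCompl (Kf m₀ : Set V) // C.supp.Infinite} :=
    fun e => ⟨e.val (op (Kf m₀)), hendinf e _⟩ with hJ
  have hJinj : Function.Injective J := by
    intro e e' heq
    have heq0 : e.val (op (Kf m₀)) = e'.val (op (Kf m₀)) := Subtype.mk_eq_mk.mp heq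
    apply Subtype.ext
    funext K
    set m := m₀ + K.unop.sup (G.dist o) with hm'
    have hm : m₀ ≤ m := by omega
    have hKfeq : e.val (op (Kf m)) = e'.val (op (Kf m)) := by
      apply huniq m hm _ _ (hendinf e _) (hendinf e' _)
      exact ((hdet e (Kf m₀) m (hKsubF hm) (hKsub hm)).symm.trans heq0).trans
        (hdet e' (Kf m₀) m (hKsubF hm) (hKsub hm))
    have hval : e.val (op K.unop) = e'.val (op K.unop) := by
      rw [hdet e K.unop m (hμF K) (hμ K), hdet e' K.unop m (hμF K) (hμ K), hKfeq]
    rw [Opposite.op_unop] at hval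
    exact hval
  have hJsurj : Function.Surjective J := by
    rintro ⟨C₀, hC₀⟩
    have hexinv : ∀ (m : ℕ) (hm : m₀ ≤ m), ∃ D : G.ComponentCompl (Kf m : Set V),
        D.supp.Infinite ∧ D.hom (hKsub hm) = C₀ := by
      intro m hm
      exact hom_surj_on_infinite hconn (hKsub hm) (Kf m).finite_toSet hC₀
    choose Dm hDinf hDhom using hexinv
    have hcons : ∀ (m m' : ℕ) (hm : m₀ ≤ m) (hmm' : m ≤ m'),
        (Dm m' (le_trans hm hmm')).hom (hKsub hmm') = Dm m hm := by
      intro m m' hm hmm'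
      apply huniq m hm _ _ (ComponentCompl.hom_infinite _ _ (hDinf m' (le_trans hm hmm')))
        (hDinf m hm)
      rw [hDhom m hm]
      rw [← ComponentCompl.hom_trans]
      exact hDhom m' (le_trans hm hmm')
    have hwd : ∀ (K : Finset V) (m m' : ℕ) (hm : m₀ ≤ m) (hm' : m₀ ≤ m')
        (h : (K : Set V) ⊆ (Kf m : Set V)) (h' : (K : Set V) ⊆ (Kf m' : Set V)),
        (Dm m hm).hom h = (Dm m' hm').hom h' := by
      intro K m m' hm hm' h h'
      have e1 : (Dm m hm).hom h =
          (Dm (max m m') (le_trans hm (le_max_left _ _))).hom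
            (le_trans h (hKsub (le_max_left m m'))) := by
        rw [← hcons m (max m m') hm (le_max_left _ _), ← ComponentCompl.hom_trans]
      have e2 : (Dm m' hm').hom h' =
          (Dm (max m m') (le_trans hm (le_max_left _ _))).hom
            (le_trans h' (hKsub (le_max_right m m'))) := by
        rw [← hcons m' (max m m') hm' (le_max_right _ _), ← ComponentCompl.hom_trans]
      rw [e1, e2]
    set s : ∀ K : (Finset V)ᵒᵖ, G.componentComplFunctor.obj K := fun K =>
      (Dm (m₀ + K.unop.sup (G.dist o)) (by omega)).hom (hμ K) with hs
    have hsec : s ∈ G.componentComplFunctor.sections := by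
      intro i j f
      have hji : ((j.unop : Finset V) : Set V) ⊆ ((i.unop : Finset V) : Set V) := by
        intro z hz
        exact (CategoryTheory.le_of_op_hom f) hz
      show ComponentCompl.hom hji (s i) = s j
      rw [hs]
      rw [← ComponentCompl.hom_trans]
      exact hwd j.unop _ _ (by omega) (by omega) _ (hμ j)
    refine ⟨⟨s, hsec⟩, ?_⟩
    apply Subtype.ext
    show s (op (Kf m₀)) = C₀
    rw [hs]
    exact hDhom _ _
  calc Nat.card G.end
      = Nat.card {C : G.ComponentCompl (Kf m₀ : Set V) // C.supp.Infinite} :=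
        Nat.card_eq_of_bijective J ⟨hJinj, hJsurj⟩
    _ = nIC G (Kf m₀ : Set V) := rfl
    _ = nIC G (ballS G o m₀) := by rw [hKfco]

end EndsCount
end Stmt19


open Stmt19 in
/-- a locally finite connected infinite vertex-transitive graph of linear
growth has exactly two ends. -/
theorem stmt19 {V : Type*} (G : SimpleGraph V) [∀ v, Fintype (G.neighborSet v)]
    (hconn : G.Connected) (hinf : Infinite V)
    (htrans : ∀ u v : V, ∃ φ : G ≃g G, φ u = v)
    (o : V)
    (hlin : ∃ c : ℕ, ∀ n : ℕ, {v : V | G.dist o v ≤ n}.Finite ∧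
      {v : V | G.dist o v ≤ n}.ncard ≤ c * n + c) :
    Nat.card G.end = 2 := by
  classical
  haveI := hinf
  obtain ⟨c, hc⟩ := hlin
  by_cases hTwo : ∃ S : Set V, S.Finite ∧ ∃ u v, deep G S u ∧ deep G S v ∧ ¬ RA G S u v
  · obtain ⟨m₀', hstab'⟩ := exists_stab hconn o hc
    obtain ⟨m₁, h2le⟩ := two_le_nIC hconn o hc hTwo
    set m₀ := max m₀' m₁ with hm₀
    have hstab : ∀ m, m₀ ≤ m → nIC G (ballS G o m) = nIC G (ballS G o m₀) := by
      intro m hm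
      rw [hstab' m (le_trans (le_max_left _ _) hm), hstab' m₀ (le_max_left _ _)]
    have hN2 : nIC G (ballS G o m₀) = 2 :=
      le_antisymm (nIC_le_two hconn o hc htrans hstab) (h2le m₀ (le_max_right _ _))
    rw [card_end_eq hconn o hc hstab, hN2]
  · push_neg at hTwo
    exact absurd (one_end_absurd hconn o hc htrans hTwo) (fun h => h)
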